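/- arXiv:2506.07881 — 4 statements merged into one kernel-verified Lean document; each statement's English description precedes it below -/
import Mathlib

section
/- Let A be a set and S ⊆ A^{2×2} be (2)-reflexive and (2)-symmetric, and suppose H(S) is (2)-reflexive and (2)-symmetric whenever S is, and likewise for V. Then the union ⋃_{n≥0} (V∘H)^n(S) is (2)-transitive: if (a,b,c,d) and (c,d,e,f) are in the union then so is (a,b,e,f), and if (a,b,c,d) and (b,e,d,f) are in the union then so is (a,e,c,f). -/
variable {A : Type*}

/-- Horizontal relational square of a set of 2×2 matrices (a,b,c,d) with rows (a,b),(c,d). -/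
def H2 (S : A → A → A → A → Prop) : A → A → A → A → Prop :=
  fun a b c d => ∃ e f, S a b e f ∧ S e f c d

/-- Vertical relational square. -/
def V2 (S : A → A → A → A → Prop) : A → A → A → A → Prop :=
  fun a b c d => ∃ e f, S e b f d ∧ S a e c f

/-- (2)-reflexivity. -/
def Refl2 (S : A → A → A → A → Prop) : Prop :=
  ∀ a b c d, S a b c d → S a a c c ∧ S b b d d ∧ S c d c d ∧ S a b a b

/-- (2)-symmetry. -/
def Symm2 (S : A → A → A → A → Prop) : Prop :=
  ∀ a b c d, S a b c d → S b a d c ∧ S c d a b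

/-- (2)-transitivity (horizontal and vertical). -/
def Trans2 (S : A → A → A → A → Prop) : Prop :=
  (∀ a b c d e f, S a b c d → S c d e f → S a b e f) ∧
  (∀ a b c d e f, S a b c d → S b e d f → S a e c f)

/-- (2)-equivalence relation. -/
def IsEq2 (S : A → A → A → A → Prop) : Prop := Refl2 S ∧ Symm2 S ∧ Trans2 S

/-- The composite operator V ∘ H. -/
def VH (S : A → A → A → A → Prop) : A → A → A → A → Prop := V2 (H2 S)

theorem stmt3 (S : A → A → A → A → Prop) (hrefl : Refl2 S) (hsymm : Symm2 S)
    (hH : ∀ T : A → A → A → A → Prop, Refl2 T → Symm2 T → Refl2 (H2 T) ∧ Symm2 (H2 T))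
    (hV : ∀ T : A → A → A → A → Prop, Refl2 T → Symm2 T → Refl2 (V2 T) ∧ Symm2 (V2 T)) :
    Trans2 (fun a b c d => ∃ n : ℕ, (VH^[n] S) a b c d) := by
  -- every iterate is reflexive and symmetric
  have hiter : ∀ n : ℕ, Refl2 (VH^[n] S) ∧ Symm2 (VH^[n] S) := by
    intro n
    induction n with
    | zero => exact ⟨hrefl, hsymm⟩
    | succ n ih =>
      rw [Function.iterate_succ_apply']
      have hh := hH _ ih.1 ih.2
      exact hV _ hh.1 hh.2
  -- T ⊆ H2 T when T reflexive
  have subH : ∀ T : A → A → A → A → Prop, Refl2 T →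
      ∀ a b c d, T a b c d → H2 T a b c d := by
    intro T hT a b c d h
    exact ⟨a, b, (hT a b c d h).2.2.2, h⟩
  -- T ⊆ V2 T when T reflexive
  have subV : ∀ T : A → A → A → A → Prop, Refl2 T →
      ∀ a b c d, T a b c d → V2 T a b c d := by
    intro T hT a b c d h
    exact ⟨b, d, (hT a b c d h).2.1, h⟩
  -- one step of the chain
  have step : ∀ n : ℕ, ∀ a b c d, (VH^[n] S) a b c d → (VH^[n+1] S) a b c d := by
    intro n a b c d h
    rw [Function.iterate_succ_apply']
    have hh := hH _ (hiter n).1 (hiter n).2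
    exact subV _ hh.1 a b c d (subH _ (hiter n).1 a b c d h)
  have mono : ∀ m n : ℕ, n ≤ m → ∀ a b c d, (VH^[n] S) a b c d → (VH^[m] S) a b c d := by
    intro m
    induction m with
    | zero => intro n hn a b c d h; rwa [Nat.le_zero.mp hn] at h
    | succ m ih =>
      intro n hn a b c d h
      rcases Nat.lt_or_ge n (m+1) with hlt | hge
      · exact step m a b c d (ih n (Nat.lt_succ_iff.mp hlt) a b c d h)
      · rwa [Nat.le_antisymm hn hge] at h
  constructor
  · rintro a b c d e f ⟨n, hn⟩ ⟨m, hm⟩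
    refine ⟨max n m + 1, ?_⟩
    have h1 := mono (max n m) n (Nat.le_max_left n m) a b c d hn
    have h2 := mono (max n m) m (Nat.le_max_right n m) c d e f hm
    rw [Function.iterate_succ_apply']
    show V2 (H2 (VH^[max n m] S)) a b e f
    have hh := hH _ (hiter (max n m)).1 (hiter (max n m)).2
    exact subV _ hh.1 a b e f ⟨c, d, h1, h2⟩
  · rintro a b c d e f ⟨n, hn⟩ ⟨m, hm⟩
    refine ⟨max n m + 1, ?_⟩
    have h1 := mono (max n m) n (Nat.le_max_left n m) a b c d hn
    have h2 := mono (max n m) m (Nat.le_max_right n m) b e d f hm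
    rw [Function.iterate_succ_apply']
    show V2 (H2 (VH^[max n m] S)) a e c f
    exact ⟨b, d, subH _ (hiter (max n m)).1 b e d f h2,
      subH _ (hiter (max n m)).1 a b c d h1⟩
end

section
/- Let A be a set and S ⊆ A^{2×2} be (2)-reflexive and (2)-symmetric. Then the least (2)-equivalence relation Eq₂(S) containing S equals the union ⋃_{n≥0} (V∘H)^n(S). -/
variable {A : Type*}

/-- Eq₂(S): the least (2)-equivalence relation containing S, as the intersection of all
(2)-equivalence relations containing S. -/
def Eq2 (S : A → A → A → A → Prop) : A → A → A → A → Prop :=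
  fun a b c d => ∀ R : A → A → A → A → Prop,
    IsEq2 R → (∀ x y z w, S x y z w → R x y z w) → R a b c d

lemma h2_refl {S : A → A → A → A → Prop} (h : Refl2 S) : Refl2 (H2 S) := by
  rintro a b c d ⟨e, f, h1, h2⟩
  obtain ⟨h1a, h1b, _, h1d⟩ := h _ _ _ _ h1
  obtain ⟨h2a, h2b, h2c, _⟩ := h _ _ _ _ h2
  exact ⟨⟨e, e, h1a, h2a⟩, ⟨f, f, h1b, h2b⟩, ⟨c, d, h2c, h2c⟩, ⟨a, b, h1d, h1d⟩⟩

lemma h2_symm {S : A → A → A → A → Prop} (h : Symm2 S) : Symm2 (H2 S) := by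
  rintro a b c d ⟨e, f, h1, h2⟩
  obtain ⟨h1s, h1r⟩ := h _ _ _ _ h1
  obtain ⟨h2s, h2r⟩ := h _ _ _ _ h2
  exact ⟨⟨f, e, h1s, h2s⟩, ⟨e, f, h2r, h1r⟩⟩

lemma v2_refl {S : A → A → A → A → Prop} (h : Refl2 S) : Refl2 (V2 S) := by
  rintro a b c d ⟨e, f, h1, h2⟩
  obtain ⟨_, h1b, h1c, h1d⟩ := h _ _ _ _ h1
  obtain ⟨h2a, _, h2c, h2d⟩ := h _ _ _ _ h2
  exact ⟨⟨a, c, h2a, h2a⟩, ⟨b, d, h1b, h1b⟩, ⟨f, f, h1c, h2c⟩, ⟨e, e, h1d, h2d⟩⟩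

lemma v2_symm {S : A → A → A → A → Prop} (h : Symm2 S) : Symm2 (V2 S) := by
  rintro a b c d ⟨e, f, h1, h2⟩
  obtain ⟨h1s, h1r⟩ := h _ _ _ _ h1
  obtain ⟨h2s, h2r⟩ := h _ _ _ _ h2
  exact ⟨⟨e, f, h2s, h1s⟩, ⟨f, e, h1r, h2r⟩⟩

lemma sub_h2 {S : A → A → A → A → Prop} (h : Refl2 S) :
    ∀ a b c d, S a b c d → H2 S a b c d := by
  intro a b c d hs
  exact ⟨c, d, hs, (h _ _ _ _ hs).2.2.1⟩

lemma sub_v2 {S : A → A → A → A → Prop} (h : Refl2 S) :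
    ∀ a b c d, S a b c d → V2 S a b c d := by
  intro a b c d hs
  exact ⟨b, d, (h _ _ _ _ hs).2.1, hs⟩

lemma v2_mono {S T : A → A → A → A → Prop} (h : ∀ a b c d, S a b c d → T a b c d) :
    ∀ a b c d, V2 S a b c d → V2 T a b c d := by
  rintro a b c d ⟨e, f, h1, h2⟩
  exact ⟨e, f, h _ _ _ _ h1, h _ _ _ _ h2⟩

lemma h2_mono {S T : A → A → A → A → Prop} (h : ∀ a b c d, S a b c d → T a b c d) :
    ∀ a b c d, H2 S a b c d → H2 T a b c d := by
  rintro a b c d ⟨e, f, h1, h2⟩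
  exact ⟨e, f, h _ _ _ _ h1, h _ _ _ _ h2⟩

lemma vh_closed {R S' : A → A → A → A → Prop} (hR : IsEq2 R)
    (h : ∀ a b c d, S' a b c d → R a b c d) :
    ∀ a b c d, VH S' a b c d → R a b c d := by
  obtain ⟨_, _, htH, htV⟩ := hR
  rintro a b c d ⟨e, f, h1, h2⟩
  have hH : ∀ a b c d, H2 S' a b c d → R a b c d := by
    rintro a b c d ⟨p, q, g1, g2⟩
    exact htH _ _ _ _ _ _ (h _ _ _ _ g1) (h _ _ _ _ g2)
  exact htV _ _ _ _ _ _ (hH _ _ _ _ h2) (hH _ _ _ _ h1)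

theorem stmt4 (S : A → A → A → A → Prop) (hrefl : Refl2 S) (hsymm : Symm2 S) :
    ∀ a b c d, Eq2 S a b c d ↔ ∃ n : ℕ, (VH^[n] S) a b c d := by
  have key : ∀ n : ℕ, Refl2 (VH^[n] S) ∧ Symm2 (VH^[n] S) := by
    intro n
    induction n with
    | zero => exact ⟨hrefl, hsymm⟩
    | succ n ih =>
      rw [Function.iterate_succ_apply']
      exact ⟨v2_refl (h2_refl ih.1), v2_symm (h2_symm ih.2)⟩
  have step : ∀ n : ℕ, ∀ a b c d, VH^[n] S a b c d → VH^[n + 1] S a b c d := by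
    intro n a b c d h
    rw [Function.iterate_succ_apply']
    exact sub_v2 (h2_refl (key n).1) _ _ _ _ (sub_h2 (key n).1 _ _ _ _ h)
  have mono : ∀ n m : ℕ, n ≤ m → ∀ a b c d, VH^[n] S a b c d → VH^[m] S a b c d := by
    intro n m hnm
    induction hnm with
    | refl => exact fun _ _ _ _ h => h
    | step _ ih => exact fun a b c d h => step _ a b c d (ih a b c d h)
  intro a b c d
  constructor
  · intro h
    apply h (fun a b c d => ∃ n : ℕ, VH^[n] S a b c d)
    · refine ⟨?_, ?_, ?_, ?_⟩
      · rintro a b c d ⟨n, hn⟩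
        obtain ⟨r1, r2, r3, r4⟩ := (key n).1 _ _ _ _ hn
        exact ⟨⟨n, r1⟩, ⟨n, r2⟩, ⟨n, r3⟩, ⟨n, r4⟩⟩
      · rintro a b c d ⟨n, hn⟩
        obtain ⟨s1, s2⟩ := (key n).2 _ _ _ _ hn
        exact ⟨⟨n, s1⟩, ⟨n, s2⟩⟩
      · rintro a b c d e f ⟨n, hn⟩ ⟨m, hm⟩
        have h1 := mono n (max n m) (le_max_left n m) _ _ _ _ hn
        have h2 := mono m (max n m) (le_max_right n m) _ _ _ _ hm
        refine ⟨max n m + 1, ?_⟩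
        rw [Function.iterate_succ_apply']
        exact sub_v2 (h2_refl (key _).1) _ _ _ _ ⟨c, d, h1, h2⟩
      · rintro a b c d e f ⟨n, hn⟩ ⟨m, hm⟩
        have h1 := mono n (max n m) (le_max_left n m) _ _ _ _ hn
        have h2 := mono m (max n m) (le_max_right n m) _ _ _ _ hm
        refine ⟨max n m + 1, ?_⟩
        rw [Function.iterate_succ_apply']
        exact v2_mono (sub_h2 (key _).1) _ _ _ _ ⟨b, d, h2, h1⟩
    · exact fun x y z w hs => ⟨0, hs⟩
  · rintro ⟨n, hn⟩
    intro R hR hS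
    induction n generalizing a b c d with
    | zero => exact hS _ _ _ _ hn
    | succ n ih =>
      rw [Function.iterate_succ_apply'] at hn
      exact vh_closed hR (fun a b c d h => ih a b c d h) a b c d hn
end

section
/- Fix l ≥ 1 and 0 ≤ i ≤ 2l+1, and let A be a nonempty set. There is an assignment of a projection operation on A⁴ (each projection being one of π₁, π₂, π₃, π₄ : A⁴ → A) to each operation symbol s_j with j ∈ {0,…,2l+1} \ {i}, such that all identities from the list Λ_l that mention only symbols other than s_i are satisfied. In particular: if i = 0, interpret every s_j (j ≠ 0) as the third projection; if i = 2l+1, interpret every s_j (j ≠ 2l+1) as the first projection; if 1 ≤ i ≤ 2l, interpret s_j for j < i as the third projection and s_j for j > i as the first projection. -/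
/-- p is one of the four projections A⁴ → A. -/
def IsProj {A : Type*} (p : A → A → A → A → A) : Prop :=
  (p = fun a _ _ _ => a) ∨ (p = fun _ b _ _ => b) ∨
  (p = fun _ _ c _ => c) ∨ (p = fun _ _ _ d => d)

theorem stmt12 {A : Type*} [Nonempty A] (l i : ℕ) (hl : 1 ≤ l) (hi : i ≤ 2 * l + 1) :
    ∃ s : ℕ → A → A → A → A → A,
      (∀ j, j ≤ 2 * l + 1 → j ≠ i → IsProj (s j)) ∧
      -- (1) idempotence for each symbol other than s_i
      (∀ j, j ≤ 2 * l + 1 → j ≠ i → ∀ x : A, s j x x x x = x) ∧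
      -- (2)
      ((0 : ℕ) ≠ i → ∀ x y : A, s 0 y x x x = x) ∧
      -- (3)
      ((0 : ℕ) ≠ i → (1 : ℕ) ≠ i → ∀ x y : A,
        s 0 x y x x = s 1 x y x x ∧ s 0 y y x x = s 1 y y x x) ∧
      -- (4)
      (∀ k, k < l → 2 * k + 1 ≠ i → 2 * (k + 1) ≠ i → ∀ x y : A,
        s (2 * k + 1) x x y x = s (2 * (k + 1)) x x y x ∧
        s (2 * k + 1) y x y x = s (2 * (k + 1)) y x y x) ∧
      -- (5)
      (∀ k, 1 ≤ k → k < l → 2 * k ≠ i → 2 * k + 1 ≠ i → ∀ x y : A,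
        s (2 * k) x y x x = s (2 * k + 1) x y x x ∧
        s (2 * k) y y x x = s (2 * k + 1) y y x x) ∧
      -- (6),(7)
      (2 * l ≠ i → 2 * l + 1 ≠ i → ∀ x y : A,
        s (2 * l) x y x x = s (2 * l + 1) x y x x ∧
        s (2 * l) y y x x = s (2 * l + 1) y y x x) ∧
      -- (8)
      (2 * l + 1 ≠ i → ∀ x y : A, s (2 * l + 1) x y y y = x) := by
  refine ⟨fun j => if j < i then (fun _ _ c _ => c) else (fun a _ _ _ => a),
    ?_, ?_, ?_, ?_, ?_, ?_, ?_, ?_⟩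
  · intro j _ _
    by_cases h : j < i <;> simp [h, IsProj]
  · intro j _ _ x
    by_cases h : j < i <;> simp [h]
  · intro h x y
    have : 0 < i := Nat.pos_of_ne_zero (Ne.symm h)
    simp [this]
  · intro h0 h1 x y
    have : 1 < i := by omega
    have : 0 < i := by omega
    simp_all
  · intro k _ h1 h2 x y
    by_cases h : 2 * k + 1 < i
    · have h' : 2 * (k + 1) < i := by omega
      simp [h, h']
    · have h' : ¬ 2 * (k + 1) < i := by omega
      simp [h, h']
  · intro k _ _ h1 h2 x y
    by_cases h : 2 * k < i
    · have h' : 2 * k + 1 < i := by omega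
      simp [h, h']
    · have h' : ¬ 2 * k + 1 < i := by omega
      simp [h, h']
  · intro h1 h2 x y
    by_cases h : 2 * l < i
    · have h' : 2 * l + 1 < i := by omega
      simp [h, h']
    · have h' : ¬ 2 * l + 1 < i := by omega
      simp [h, h']
  · intro h x y
    have : ¬ 2 * l + 1 < i := by omega
    simp [this]
end

section
/- Let A be a set with at least two elements and l ≥ 1. There is no assignment of projections π_k : A⁴ → A (k ∈ {1,2,3,4}) to all the operation symbols s_0, …, s_{2l+1} simultaneously satisfying all identities of Λ_l. In other words, Λ_l is a nontrivial (idempotent) Maltsev condition: it cannot be satisfied by projections on a two-element set. -/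
private lemma step1 {A : Type*} {a b : A} (hab : a ≠ b) {p q : A → A → A → A → A}
    (hp : IsProj p) (hq : IsProj q) (hpa : p b a a a = a)
    (e1 : p a b a a = q a b a a) (e2 : p b b a a = q b b a a) :
    q b a a a = a := by
  rcases hq with hq | hq | hq | hq <;> subst hq
  · rcases hp with hp | hp | hp | hp <;> subst hp
    · exact absurd hpa (Ne.symm hab)
    · exact absurd e1 (Ne.symm hab)
    · exact absurd e2 hab
    · exact absurd e2 hab
  · rfl
  · rfl
  · rfl

private lemma step2 {A : Type*} {a b : A} (hab : a ≠ b) {p q : A → A → A → A → A}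
    (hp : IsProj p) (hq : IsProj q) (hpa : p b a a a = a)
    (e1 : p a a b a = q a a b a) (e2 : p b a b a = q b a b a) :
    q b a a a = a := by
  rcases hq with hq | hq | hq | hq <;> subst hq
  · rcases hp with hp | hp | hp | hp <;> subst hp
    · exact absurd hpa (Ne.symm hab)
    · exact absurd e2 hab
    · exact absurd e1 (Ne.symm hab)
    · exact absurd e2 hab
  · rfl
  · rfl
  · rfl

theorem stmt13 {A : Type*} (a b : A) (hab : a ≠ b) (l : ℕ) (hl : 1 ≤ l) :
    ¬ ∃ s : ℕ → A → A → A → A → A,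
      (∀ j, j ≤ 2 * l + 1 → IsProj (s j)) ∧
      -- (1)
      (∀ j, j ≤ 2 * l + 1 → ∀ x : A, s j x x x x = x) ∧
      -- (2)
      (∀ x y : A, s 0 y x x x = x) ∧
      -- (3)
      (∀ x y : A, s 0 x y x x = s 1 x y x x ∧ s 0 y y x x = s 1 y y x x) ∧
      -- (4)
      (∀ k, k < l → ∀ x y : A,
        s (2 * k + 1) x x y x = s (2 * (k + 1)) x x y x ∧
        s (2 * k + 1) y x y x = s (2 * (k + 1)) y x y x) ∧
      -- (5)
      (∀ k, 1 ≤ k → k < l → ∀ x y : A,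
        s (2 * k) x y x x = s (2 * k + 1) x y x x ∧
        s (2 * k) y y x x = s (2 * k + 1) y y x x) ∧
      -- (6),(7)
      (∀ x y : A,
        s (2 * l) x y x x = s (2 * l + 1) x y x x ∧
        s (2 * l) y y x x = s (2 * l + 1) y y x x) ∧
      -- (8)
      (∀ x y : A, s (2 * l + 1) x y y y = x) := by
  rintro ⟨s, hproj, _h1, h2, h3, h4, h5, h67, h8⟩
  -- combined (5),(6),(7)
  have h56 : ∀ m, 1 ≤ m → m ≤ l → ∀ x y : A,
      s (2 * m) x y x x = s (2 * m + 1) x y x x ∧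
      s (2 * m) y y x x = s (2 * m + 1) y y x x := by
    intro m hm1 hml x y
    rcases eq_or_lt_of_le hml with h | h
    · subst h; exact h67 x y
    · exact h5 m hm1 h x y
  -- key invariant: s (2k+1) is not the first projection
  have key : ∀ k, k ≤ l → s (2 * k + 1) b a a a = a := by
    intro k
    induction k with
    | zero =>
      intro _
      have hp0 : IsProj (s 0) := hproj 0 (by omega)
      have hp1 : IsProj (s (2 * 0 + 1)) := hproj (2 * 0 + 1) (by omega)
      exact step1 hab hp0 hp1 (h2 a b) (h3 a b).1 (h3 a b).2
    | succ k ih =>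
      intro hk
      have hkl : k < l := by omega
      have ha : s (2 * k + 1) b a a a = a := ih (by omega)
      have hpo : IsProj (s (2 * k + 1)) := hproj _ (by omega)
      have hpe : IsProj (s (2 * (k + 1))) := hproj _ (by omega)
      have hpo' : IsProj (s (2 * (k + 1) + 1)) := hproj _ (by omega)
      have he : s (2 * (k + 1)) b a a a = a :=
        step2 hab hpo hpe ha (h4 k hkl a b).1 (h4 k hkl a b).2
      exact step1 hab hpe hpo' he (h56 (k + 1) (by omega) hk a b).1
        (h56 (k + 1) (by omega) hk a b).2
  have hlast : s (2 * l + 1) b a a a = a := key l le_rfl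
  have hp : IsProj (s (2 * l + 1)) := hproj _ (by omega)
  have h8' : s (2 * l + 1) a b b b = a := h8 a b
  rcases hp with hp | hp | hp | hp <;> rw [hp] at hlast h8'
  · exact hab (hlast.symm)
  · exact hab h8'.symm
  · exact hab h8'.symm
  · exact hab h8'.symm
end
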